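/- Let n be a positive integer and K a field of characteristic zero containing a primitive n-th root of unity ζ. Let a, F ∈ K be such that the polynomial p(X) = X^(2n) − 2·a·X^n + F^n is irreducible in K[X]. Then L := K[X]/(p) is a field, the extension L/K is Galois of degree 2n, and its Galois group is isomorphic to the dihedral group D_n of order 2n; moreover, writing x for the image of X in L, there exist σ, τ ∈ Gal(L/K) generating Gal(L/K) with σ(x) = ζ·x, x·τ(x) = F, σ^n = τ² = (στ)² = 1. -/

import Mathlib

open Polynomial

/-!
STATEMENT 1: Let `n` be a positive integer and `K` a field of characteristic zero containing a
primitive `n`-th root of unity `ζ`.  Let `a, F ∈ K` be such that `p(X) = X^(2n) − 2aX^n + F^n`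
is irreducible in `K[X]`.  Then `L := K[X]/(p)` is a field, the extension `L/K` is Galois of
degree `2n`, its Galois group is isomorphic to the dihedral group `D_n` of order `2n`, and,
writing `x` for the image of `X` in `L`, there exist `σ, τ ∈ Gal(L/K)` generating `Gal(L/K)`
with `σ(x) = ζ·x`, `x·τ(x) = F`, `σ^n = τ² = (στ)² = 1`.
-/

set_option maxHeartbeats 2000000 in
theorem dihedral_field_extension_of_irreducible
    (n : ℕ) (hn : 0 < n)
    (K : Type) [Field K] [CharZero K]
    (ζ a F : K) (hζ : IsPrimitiveRoot ζ n)
    [hirr : Fact (Irreducible (X ^ (2 * n) - C (2 * a) * X ^ n + C (F ^ n) : K[X]))] :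
    IsField (AdjoinRoot (X ^ (2 * n) - C (2 * a) * X ^ n + C (F ^ n) : K[X])) ∧
    IsGalois K (AdjoinRoot (X ^ (2 * n) - C (2 * a) * X ^ n + C (F ^ n) : K[X])) ∧
    Module.finrank K (AdjoinRoot (X ^ (2 * n) - C (2 * a) * X ^ n + C (F ^ n) : K[X])) = 2 * n ∧
    Nonempty ((AdjoinRoot (X ^ (2 * n) - C (2 * a) * X ^ n + C (F ^ n) : K[X]) ≃ₐ[K]
        AdjoinRoot (X ^ (2 * n) - C (2 * a) * X ^ n + C (F ^ n) : K[X])) ≃* DihedralGroup n) ∧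
    ∃ σ τ : AdjoinRoot (X ^ (2 * n) - C (2 * a) * X ^ n + C (F ^ n) : K[X]) ≃ₐ[K]
        AdjoinRoot (X ^ (2 * n) - C (2 * a) * X ^ n + C (F ^ n) : K[X]),
      Subgroup.closure ({σ, τ} : Set _) = ⊤ ∧
      σ (AdjoinRoot.root (X ^ (2 * n) - C (2 * a) * X ^ n + C (F ^ n) : K[X])) =
        algebraMap K _ ζ * AdjoinRoot.root (X ^ (2 * n) - C (2 * a) * X ^ n + C (F ^ n) : K[X]) ∧
      AdjoinRoot.root (X ^ (2 * n) - C (2 * a) * X ^ n + C (F ^ n) : K[X]) *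
          τ (AdjoinRoot.root (X ^ (2 * n) - C (2 * a) * X ^ n + C (F ^ n) : K[X])) =
        algebraMap K _ F ∧
      σ ^ n = 1 ∧ τ ^ 2 = 1 ∧ (σ * τ) ^ 2 = 1 := by
  haveI : NeZero n := ⟨hn.ne'⟩
  set p : K[X] := X ^ (2 * n) - C (2 * a) * X ^ n + C (F ^ n) with hp
  have hpirr : Irreducible p := hirr.out
  have hpne : p ≠ 0 := hpirr.ne_zero
  set L := AdjoinRoot p with hL
  set x : L := AdjoinRoot.root p with hx
  set ι : K →+* L := algebraMap K L with hι
  have hdeg : p.natDegree = 2 * n := by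
    rw [hp]
    compute_degree!
    · simp [hn.ne', show ¬ (2*n = n) from by omega]
    · omega
    · omega
  -- F ≠ 0
  have hF : F ≠ 0 := by
    intro h
    have hfac0 : p = X ^ n * (X ^ n - C (2 * a)) := by
      rw [hp, h, zero_pow hn.ne', map_zero]; ring
    rcases hpirr.isUnit_or_isUnit hfac0 with hu | hu
    · exact Polynomial.not_isUnit_of_natDegree_pos _ (by simpa using hn) hu
    · refine Polynomial.not_isUnit_of_natDegree_pos _ ?_ hu
      have hd2 : (X ^ n - C (2 * a) : K[X]).natDegree = n := by
        compute_degree!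
        simp [hn.ne']
      omega
  have h0 : aeval x p = 0 := by rw [AdjoinRoot.aeval_eq, AdjoinRoot.mk_self]
  have heq : x ^ (2 * n) - 2 * ι a * x ^ n + ι F ^ n = 0 := by
    have h1 := h0
    simp only [hp, map_add, map_sub, map_mul, map_pow, aeval_X, aeval_C, map_ofNat] at h1
    linear_combination h1
  have hιinj : Function.Injective ι := ι.injective
  have hF0 : ι F ≠ 0 := fun h => hF (hιinj (by simpa using h))
  have hx0 : x ≠ 0 := by
    intro h
    rw [h, zero_pow (show 2 * n ≠ 0 by omega), zero_pow hn.ne'] at heq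
    exact hF0 (pow_eq_zero_iff hn.ne' |>.mp (by linear_combination heq))
  have hxn0 : x ^ n ≠ 0 := pow_ne_zero _ hx0
  have hζn : (ι ζ) ^ n = 1 := by rw [← map_pow, hζ.pow_eq_one, map_one]
  have hζ' : IsPrimitiveRoot (ι ζ) n := hζ.map_of_injective hιinj
  have hζ0 : ι ζ ≠ 0 := hζ'.ne_zero hn.ne'
  -- the second root of the quadratic
  have huv : x ^ n * (2 * ι a - x ^ n) = ι F ^ n := by linear_combination -heq
  have hv : (ι F * x⁻¹) ^ n = 2 * ι a - x ^ n := by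
    rw [mul_pow, inv_pow, ← div_eq_mul_inv, div_eq_iff hxn0]
    linear_combination heq
  have hz0 : ι F * x⁻¹ ≠ 0 := mul_ne_zero hF0 (inv_ne_zero hx0)
  -- factorization of p over L
  have hfac : p.map ι = (X ^ n - C (x ^ n)) * (X ^ n - C (2 * ι a - x ^ n)) := by
    have h2 : (C (x ^ n) : L[X]) * (C (2 * ι a) - C (x ^ n)) = C (ι F ^ n) := by
      rw [← map_sub, ← map_mul]; exact congrArg C huv
    simp only [map_mul, map_sub, map_pow, map_ofNat] at h2
    show Polynomial.map ι (X ^ (2 * n) - C (2 * a) * X ^ n + C (F ^ n)) = _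
    simp only [Polynomial.map_add, Polynomial.map_sub, Polynomial.map_mul, Polynomial.map_pow,
      Polynomial.map_X, Polynomial.map_C, Polynomial.map_ofNat, map_mul, map_ofNat, map_sub,
      map_pow]
    linear_combination -h2
  have hsplits : (p.map ι).Splits := by
    rw [hfac]
    exact Polynomial.Splits.mul
      (X_pow_sub_C_splits_of_isPrimitiveRoot hζ' rfl)
      (X_pow_sub_C_splits_of_isPrimitiveRoot hζ' hv)
  haveI hsf : p.IsSplittingField K L := by
    constructor
    · exact hsplits
    · rw [eq_top_iff, ← AdjoinRoot.adjoinRoot_eq_top]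
      exact Algebra.adjoin_mono (Set.singleton_subset_iff.mpr
        ((Polynomial.mem_rootSet).mpr ⟨hpne, h0⟩))
  haveI : FiniteDimensional K L := (AdjoinRoot.powerBasis hpne).finite
  have hfinrank : Module.finrank K L = 2 * n := by
    rw [(AdjoinRoot.powerBasis hpne).finrank]
    exact hdeg
  haveI hgal : IsGalois K L := IsGalois.of_separable_splitting_field hpirr.separable
  -- the automorphisms σ and τ
  have hζroot : aeval (ι ζ * x) p = 0 := by
    simp only [hp, map_add, map_sub, map_mul, map_pow, aeval_X, aeval_C, map_ofNat]
    linear_combination heq + ((ι ζ) ^ n * x ^ (2 * n) + x ^ (2 * n) - 2 * ι a * x ^ n) * hζn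
  have hτroot : aeval (ι F * x⁻¹) p = 0 := by
    simp only [hp, map_add, map_sub, map_mul, map_pow, aeval_X, aeval_C, map_ofNat]
    have h2n : (ι F * x⁻¹) ^ (2 * n) = ((ι F * x⁻¹) ^ n) ^ 2 := by
      rw [Nat.mul_comm 2 n, pow_mul]
    rw [h2n, hv]
    linear_combination heq
  set σ : L ≃ₐ[K] L :=
    AlgEquiv.ofBijective (AdjoinRoot.liftAlgHom p (Algebra.ofId K L) (ι ζ * x) hζroot)
      (AdjoinRoot.liftAlgHom p (Algebra.ofId K L) (ι ζ * x) hζroot).bijective with hσdef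
  set τ : L ≃ₐ[K] L :=
    AlgEquiv.ofBijective (AdjoinRoot.liftAlgHom p (Algebra.ofId K L) (ι F * x⁻¹) hτroot)
      (AdjoinRoot.liftAlgHom p (Algebra.ofId K L) (ι F * x⁻¹) hτroot).bijective with hτdef
  have hσx : σ x = ι ζ * x := by
    show (AdjoinRoot.liftAlgHom p (Algebra.ofId K L) (ι ζ * x) hζroot) x = ι ζ * x
    exact AdjoinRoot.liftAlgHom_root p (Algebra.ofId K L) (ι ζ * x) hζroot
  have hτx : τ x = ι F * x⁻¹ := by
    show (AdjoinRoot.liftAlgHom p (Algebra.ofId K L) (ι F * x⁻¹) hτroot) x = ι F * x⁻¹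
    exact AdjoinRoot.liftAlgHom_root p (Algebra.ofId K L) (ι F * x⁻¹) hτroot
  have ext' : ∀ ψ χ : L ≃ₐ[K] L, ψ x = χ x → ψ = χ := by
    intro ψ χ h
    have h2 : (ψ : L →ₐ[K] L) = (χ : L →ₐ[K] L) := AdjoinRoot.algHom_ext h
    exact AlgEquiv.ext fun y => DFunLike.congr_fun h2 y
  have hσpow : ∀ k : ℕ, (σ ^ k) x = ι (ζ ^ k) * x := by
    intro k
    induction k with
    | zero => simp
    | succ k ih =>
      rw [pow_succ, AlgEquiv.mul_apply, hσx, map_mul, AlgEquiv.commutes, ih, map_pow, map_pow,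
        pow_succ]
      ring
  have hσn : σ ^ n = 1 := by
    apply ext'
    rw [hσpow n, hζ.pow_eq_one, map_one, one_mul, AlgEquiv.one_apply]
  have hτ2 : τ ^ 2 = 1 := by
    apply ext'
    rw [pow_two, AlgEquiv.mul_apply, hτx, map_mul, AlgEquiv.commutes, map_inv₀, hτx,
      AlgEquiv.one_apply]
    rw [← hι, mul_inv, inv_inv, mul_inv_cancel_left₀ hF0]
  have hστ1 : (σ * τ) x = ι F * (ι ζ * x)⁻¹ := by
    rw [AlgEquiv.mul_apply, hτx, map_mul, AlgEquiv.commutes, map_inv₀, hσx]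
  have hστ2 : (σ * τ) ^ 2 = 1 := by
    apply ext'
    rw [pow_two, AlgEquiv.mul_apply, hστ1, map_mul, map_inv₀, map_mul, AlgEquiv.commutes,
      AlgEquiv.commutes, hστ1, AlgEquiv.one_apply]
    rw [← hι, show ι ζ * (ι F * (ι ζ * x)⁻¹) = ι F * x⁻¹ by
      rw [mul_inv, mul_left_comm, mul_inv_cancel_left₀ hζ0], mul_inv, inv_inv,
      mul_inv_cancel_left₀ hF0]
  -- commutation relation
  have hbase : σ * τ = τ * σ⁻¹ := by
    have h1 : (σ * τ) * (σ * τ) = 1 := by rw [← pow_two]; exact hστ2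
    have h2 : τ * τ = 1 := by rw [← pow_two]; exact hτ2
    have h3 : σ * τ = (σ * τ)⁻¹ := eq_inv_of_mul_eq_one_left h1
    have h4 : τ⁻¹ = τ := inv_eq_of_mul_eq_one_left h2
    rw [h3, mul_inv_rev, h4]
  have hcomm : ∀ k : ℕ, σ ^ k * τ = τ * (σ ^ k)⁻¹ := by
    intro k
    induction k with
    | zero => simp
    | succ k ih =>
      rw [pow_succ, mul_assoc, hbase, ← mul_assoc, ih, mul_assoc, ← mul_inv_rev, ← pow_succ', pow_succ]
  -- the powers map
  set pw : ZMod n → (L ≃ₐ[K] L) := fun i => σ ^ i.val with hpw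
  have hpwadd : ∀ i j : ZMod n, pw (i + j) = pw i * pw j := by
    intro i j
    simp only [hpw]
    rw [← pow_add, ZMod.val_add]
    conv_rhs => rw [← Nat.mod_add_div (i.val + j.val) n, pow_add, pow_mul, hσn, one_pow, mul_one]
  have hpwsub : ∀ i j : ZMod n, pw (j - i) = (pw i)⁻¹ * pw j := by
    intro i j
    rw [eq_inv_mul_iff_mul_eq, ← hpwadd]
    congr 1
    ring
  -- the homomorphism from the dihedral group
  set φf : DihedralGroup n → (L ≃ₐ[K] L) := fun g =>
    match g with
    | .r i => pw i
    | .sr i => τ * pw i with hφf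
  have hφmul : ∀ g h : DihedralGroup n, φf (g * h) = φf g * φf h := by
    rintro (i | i) (j | j)
    · rw [DihedralGroup.r_mul_r]
      exact hpwadd i j
    · rw [DihedralGroup.r_mul_sr]
      show τ * pw (j - i) = pw i * (τ * pw j)
      rw [hpwsub, ← mul_assoc, ← mul_assoc]
      congr 1
      have := hcomm i.val
      rw [show pw i = σ ^ i.val from rfl, this]
    · rw [DihedralGroup.sr_mul_r]
      show τ * pw (i + j) = (τ * pw i) * pw j
      rw [hpwadd, mul_assoc]
    · rw [DihedralGroup.sr_mul_sr]
      show pw (j - i) = (τ * pw i) * (τ * pw j)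
      have h2 : τ * τ = 1 := by rw [← pow_two]; exact hτ2
      rw [hpwsub]
      have hc' : pw i * τ = τ * (pw i)⁻¹ := hcomm i.val
      have hassoc : τ * pw i * (τ * pw j) = τ * (pw i * τ) * pw j := by group
      rw [hassoc, hc', ← mul_assoc τ τ, h2, one_mul]
  set φ : DihedralGroup n →* (L ≃ₐ[K] L) := MonoidHom.mk' φf hφmul with hφ
  -- surjectivity
  have hτσ : ∀ k : ℕ, (τ * σ ^ k) x = ι (ζ ^ k) * (ι F * x⁻¹) := by
    intro k
    rw [AlgEquiv.mul_apply, hσpow k, map_mul, AlgEquiv.commutes, hτx]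
  have hsurj : Function.Surjective φ := by
    intro ψ
    have hy : aeval (ψ x) p = 0 := by
      have h1 := aeval_algHom_apply (ψ : L →ₐ[K] L) x p
      rw [h0, map_zero] at h1
      simpa using h1
    have hy2 : ((ψ x) ^ n - x ^ n) * ((ψ x) ^ n - (2 * ι a - x ^ n)) = 0 := by
      have : Polynomial.eval (ψ x) (p.map ι) = 0 := by
        rw [Polynomial.eval_map, ← aeval_def, hy]
      rw [hfac] at this
      simpa using this
    rcases mul_eq_zero.mp hy2 with h | h
    · have h1 : (ψ x * x⁻¹) ^ n = 1 := by
        rw [sub_eq_zero] at h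
        rw [mul_pow, inv_pow, h]
        exact mul_inv_cancel₀ hxn0
      obtain ⟨i, hi, hie⟩ := hζ'.eq_pow_of_pow_eq_one h1
      refine ⟨.r (i : ZMod n), ?_⟩
      apply ext'
      show pw (i : ZMod n) x = ψ x
      rw [hpw]
      simp only
      rw [ZMod.val_natCast_of_lt hi, hσpow i, map_pow]
      rw [hie]
      exact inv_mul_cancel_right₀ hx0 _
    · have h1 : (ψ x * (ι F * x⁻¹)⁻¹) ^ n = 1 := by
        rw [sub_eq_zero] at h
        rw [mul_pow, inv_pow, h, hv]
        have : 2 * ι a - x ^ n ≠ 0 := by rw [← hv]; exact pow_ne_zero _ hz0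
        exact mul_inv_cancel₀ this
      obtain ⟨i, hi, hie⟩ := hζ'.eq_pow_of_pow_eq_one h1
      refine ⟨.sr (i : ZMod n), ?_⟩
      apply ext'
      show (τ * pw (i : ZMod n)) x = ψ x
      rw [hpw]
      simp only
      rw [ZMod.val_natCast_of_lt hi]
      rw [hτσ i, map_pow]
      rw [hie]
      exact inv_mul_cancel_right₀ hz0 _
  have hcard : Fintype.card (DihedralGroup n) = Fintype.card (L ≃ₐ[K] L) := by
    rw [DihedralGroup.card, ← Nat.card_eq_fintype_card, IsGalois.card_aut_eq_finrank, hfinrank]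
  have hbij : Function.Bijective φ :=
    (Fintype.bijective_iff_surjective_and_card φ).mpr ⟨hsurj, hcard⟩
  refine ⟨Field.toIsField L, hgal, hfinrank,
    ⟨(MulEquiv.ofBijective φ hbij).symm⟩, σ, τ, ?_, hσx, ?_, hσn, hτ2, hστ2⟩
  · rw [eq_top_iff]
    intro ψ _
    obtain ⟨g, rfl⟩ := hsurj ψ
    have hσmem : σ ∈ Subgroup.closure ({σ, τ} : Set (L ≃ₐ[K] L)) :=
      Subgroup.subset_closure (by simp)
    have hτmem : τ ∈ Subgroup.closure ({σ, τ} : Set (L ≃ₐ[K] L)) :=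
      Subgroup.subset_closure (by simp)
    rcases g with i | i
    · exact pow_mem hσmem _
    · exact mul_mem hτmem (pow_mem hσmem _)
  · rw [hτx]
    exact (mul_left_comm _ _ _).trans ((congrArg _ (mul_inv_cancel₀ hx0)).trans (mul_one _))
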